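/- If ¬(ℓ ≤ ℓ') in the security semilattice L, then there is no natural transformation from the functor T_ℓ to the functor T_ℓ' on the category of L-levelled games and strategies; i.e., there is no family of strategies τ_A : T_ℓ A → T_ℓ' A indexed by L-levelled games A such that for every strategy σ : A → B one has (T_ℓ σ) ; τ_B = τ_A ; (T_ℓ' σ). -/

import Mathlib

/- Justified AJM games with security levels (levelled games), after
   Abramsky's "Semantics of access control / games" paper. -/

namespace AJM

inductive Pol where
  | P
  | O
deriving DecidableEq

inductive QA where
  | Q
  | Ans
deriving DecidableEq

def Pol.flip : Pol → Pol
  | .P => .O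
  | .O => .P

/-- Well-bracketed strings over moves (condition (p4)): built from
matching question/answer pairs, nesting and concatenation. -/
inductive WB {M : Type} (lab : M → Pol × QA) (just : M → Option M) : List M → Prop
  | nil : WB lab just []
  | wrap (a q : M) (u : List M) : (lab a).2 = QA.Ans → just a = some q →
      WB lab just u → WB lab just (q :: (u ++ [a]))
  | append (u v : List M) : WB lab just u → WB lab just v → WB lab just (u ++ v)

/-- Conditions (p1)–(p5): Opponent starts, alternation, linearity,
well-bracketing, justifiers occur before their moves. -/
def ValidSeq {M : Type} (lab : M → Pol × QA) (just : M → Option M) (s : List M) : Prop :=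
  (∀ m, s.head? = some m → (lab m).1 = Pol.O) ∧
  List.Chain' (fun m m' => (lab m).1 ≠ (lab m').1) s ∧
  s.Nodup ∧
  (∃ t, s <+: t ∧ WB lab just t) ∧
  (∀ s₁ m s₂, s = s₁ ++ m :: s₂ → ∀ m', just m = some m' → m' ∈ s₁)

/-- Condition (p6): a non-initial move may only be played if its level is
below (i.e. at least as trusted as) the level of its justifier. -/
def LevelOK {M L : Type} [SemilatticeSup L] (lev : M → L) (just : M → Option M)
    (s : List M) : Prop :=
  ∀ m ∈ s, ∀ m', just m = some m' → lev m ≤ lev m'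

variable (L : Type) [SemilatticeSup L] [OrderBot L]

/-- An `L`-levelled justified AJM game (the data). -/
structure LGame where
  M : Type
  lab : M → Pol × QA
  just : M → Option M
  lev : M → L
  pos : Set (List M)
  equiv : List M → List M → Prop

variable {L}

namespace LGame

/-- The axioms making the data of an `LGame` an actual levelled justified AJM game. -/
structure Valid (A : LGame L) : Prop where
  just_wf : WellFounded fun m m' : A.M => A.just m' = some m
  just_pol : ∀ m m', A.just m = some m' → (A.lab m).1 ≠ (A.lab m').1
  just_qa : ∀ m m', A.just m = some m' → (A.lab m).2 = QA.Ans → (A.lab m').2 = QA.Q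
  ans_justified : ∀ m, (A.lab m).2 = QA.Ans → A.just m ≠ none
  pos_nonempty : A.pos.Nonempty
  pos_prefix_closed : ∀ s t : List A.M, s <+: t → t ∈ A.pos → s ∈ A.pos
  pos_valid : ∀ s ∈ A.pos, ValidSeq A.lab A.just s
  pos_level : ∀ s ∈ A.pos, LevelOK A.lev A.just s
  equiv_mem : ∀ s t, A.equiv s t → s ∈ A.pos ∧ t ∈ A.pos
  equiv_refl : ∀ s ∈ A.pos, A.equiv s s
  equiv_symm : ∀ s t, A.equiv s t → A.equiv t s
  equiv_trans : ∀ s t u, A.equiv s t → A.equiv t u → A.equiv s u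
  equiv_lab : ∀ s t, A.equiv s t → s.map A.lab = t.map A.lab
  equiv_prefix : ∀ s t s' t', A.equiv s t → s' <+: s → t' <+: t →
      s'.length = t'.length → A.equiv s' t'
  equiv_ext : ∀ s t a, A.equiv s t → s ++ [a] ∈ A.pos → ∃ b, A.equiv (s ++ [a]) (t ++ [b])

/-- A strategy on a game: a non-empty set of even-length positions that is
causally consistent, representation independent and deterministic. -/
structure IsStrategy (A : LGame L) (σ : Set (List A.M)) : Prop where
  subset_pos : σ ⊆ A.pos
  even_length : ∀ s ∈ σ, Even s.length
  nonempty : σ.Nonempty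
  causal : ∀ s a b, s ++ [a, b] ∈ σ → s ∈ σ
  repind : ∀ s t, s ∈ σ → A.equiv s t → t ∈ σ
  det : ∀ s t a b a' b', s ++ [a, b] ∈ σ → t ++ [a', b'] ∈ σ →
      A.equiv (s ++ [a]) (t ++ [a']) → A.equiv (s ++ [a, b]) (t ++ [a', b'])

/-- A total strategy responds to every Opponent extension of one of its plays. -/
def Total (A : LGame L) (σ : Set (List A.M)) : Prop :=
  ∀ s ∈ σ, ∀ a, s ++ [a] ∈ A.pos → ∃ b, s ++ [a, b] ∈ σ

/-- Initial (justifier-less) moves of a game. -/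
def Init (A : LGame L) : Type := {m : A.M // A.just m = none}

/-- The level monad `T_ℓ`: bump every level by `⊔ ℓ`, all else unchanged. -/
def T (ℓ : L) (A : LGame L) : LGame L :=
  { A with lev := fun m => A.lev m ⊔ ℓ }

/-- Level(A): the set of levels of initial moves. -/
def LevelSet (A : LGame L) : Set L := {ℓ | ∃ m : A.M, A.just m = none ∧ A.lev m = ℓ}

/-- A ▷ B. -/
def Rhd (A B : LGame L) : Prop := ∀ ℓ ∈ LevelSet A, ∀ ℓ' ∈ LevelSet B, ¬ℓ ≤ ℓ'

/-- `A` is protected at level `ℓ`. -/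
def Protected (A : LGame L) (ℓ : L) : Prop := ∀ ℓ' ∈ LevelSet A, ℓ ≤ ℓ'

/-- The tensor unit `I`: the empty game. -/
def iGame : LGame L where
  M := Empty
  lab := fun m => m.elim
  just := fun m => m.elim
  lev := fun m => m.elim
  pos := {[]}
  equiv := fun s t => s = [] ∧ t = []

/- ### Tensor -/

def restL {α β : Type} (s : List (α ⊕ β)) : List α := s.filterMap Sum.getLeft?

def restR {α β : Type} (s : List (α ⊕ β)) : List β := s.filterMap Sum.getRight?

def tlab (A B : LGame L) : A.M ⊕ B.M → Pol × QA := Sum.elim A.lab B.lab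

def tjust (A B : LGame L) : A.M ⊕ B.M → Option (A.M ⊕ B.M)
  | .inl a => (A.just a).map .inl
  | .inr b => (B.just b).map .inr

def tlev (A B : LGame L) : A.M ⊕ B.M → L := Sum.elim A.lev B.lev

def tpos (A B : LGame L) : Set (List (A.M ⊕ B.M)) :=
  {s | ValidSeq (tlab A B) (tjust A B) s ∧ LevelOK (tlev A B) (tjust A B) s ∧
       restL s ∈ A.pos ∧ restR s ∈ B.pos}

/-- Tensor product of levelled games. -/
def tensor (A B : LGame L) : LGame L where
  M := A.M ⊕ B.M
  lab := tlab A B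
  just := tjust A B
  lev := tlev A B
  pos := tpos A B
  equiv := fun s t => s ∈ tpos A B ∧ t ∈ tpos A B ∧
    A.equiv (restL s) (restL t) ∧ B.equiv (restR s) (restR t) ∧
    s.map Sum.isLeft = t.map Sum.isLeft

/- ### Additive conjunction -/

def wpos (A B : LGame L) : Set (List (A.M ⊕ B.M)) :=
  (List.map Sum.inl '' A.pos) ∪ (List.map Sum.inr '' B.pos)

/-- The additive conjunction `A & B`. -/
def wand (A B : LGame L) : LGame L where
  M := A.M ⊕ B.M
  lab := tlab A B
  just := tjust A B
  lev := tlev A B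
  pos := wpos A B
  equiv := fun s t =>
    (∃ s' t', A.equiv s' t' ∧ s = s'.map Sum.inl ∧ t = t'.map Sum.inl) ∨
    (∃ s' t', B.equiv s' t' ∧ s = s'.map Sum.inr ∧ t = t'.map Sum.inr)

/- ### Bang -/

def bjust (A : LGame L) : ℕ × A.M → Option (ℕ × A.M)
  | (i, m) => (A.just m).map fun m' => (i, m')

def bresti (A : LGame L) (i : ℕ) (s : List (ℕ × A.M)) : List A.M :=
  s.filterMap fun p => if p.1 = i then some p.2 else none

def bpos (A : LGame L) : Set (List (ℕ × A.M)) :=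
  {s | ValidSeq (fun p => A.lab p.2) (bjust A) s ∧
       LevelOK (fun p => A.lev p.2) (bjust A) s ∧ ∀ i, bresti A i s ∈ A.pos}

/-- The exponential `!A`. -/
def bang (A : LGame L) : LGame L where
  M := ℕ × A.M
  lab := fun p => A.lab p.2
  just := bjust A
  lev := fun p => A.lev p.2
  pos := bpos A
  equiv := fun s t => s ∈ bpos A ∧ t ∈ bpos A ∧ ∃ π : Equiv.Perm ℕ,
    (∀ i, A.equiv (bresti A i s) (bresti A (π i) t)) ∧
    s.map (fun p => π p.1) = t.map Prod.fst

/- ### Linear implication -/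

/-- Moves of `A ⊸ B`: a copy of `M_A` for each initial move of `B`, plus `M_B`. -/
abbrev hM (A B : LGame L) : Type := (B.Init × A.M) ⊕ B.M

def hlab (A B : LGame L) : hM A B → Pol × QA
  | .inl (_, a) => ((A.lab a).1.flip, (A.lab a).2)
  | .inr b => B.lab b

def hjust (A B : LGame L) : hM A B → Option (hM A B)
  | .inl (b, a) =>
      match A.just a with
      | some a' => some (.inl (b, a'))
      | none => some (.inr b.1)
  | .inr b => (B.just b).map .inr

def hlev (A B : LGame L) : hM A B → L
  | .inl (_, a) => A.lev a
  | .inr b => B.lev b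

/-- Restriction to `A` (erasing copy tags). -/
def hrestA (A B : LGame L) (s : List (hM A B)) : List A.M :=
  s.filterMap fun m => match m with
    | .inl (_, a) => some a
    | .inr _ => none

/-- Restriction to `B`. -/
def hrestB (A B : LGame L) (s : List (hM A B)) : List B.M :=
  s.filterMap fun m => match m with
    | .inl _ => none
    | .inr b => some b

-- Restriction to the `b`-th copy of `A`.
open Classical in
noncomputable def hrestAb (A B : LGame L) (b : B.Init) (s : List (hM A B)) : List A.M :=
  s.filterMap fun m => match m with
    | .inl (b', a) => if b' = b then some a else none
    | .inr _ => none

def htag (A B : LGame L) : hM A B → Option B.Init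
  | .inl (b, _) => some b
  | .inr _ => none

def hpos (A B : LGame L) : Set (List (hM A B)) :=
  {s | ValidSeq (hlab A B) (hjust A B) s ∧ LevelOK (hlev A B) (hjust A B) s ∧
       hrestA A B s ∈ A.pos ∧ hrestB A B s ∈ B.pos}

/-- The linear implication game `A ⊸ B`. -/
noncomputable def lhom (A B : LGame L) : LGame L where
  M := hM A B
  lab := hlab A B
  just := hjust A B
  lev := hlev A B
  pos := hpos A B
  equiv := fun s t => s ∈ hpos A B ∧ t ∈ hpos A B ∧
    (∀ b : B.Init, A.equiv (hrestAb A B b s) (hrestAb A B b t)) ∧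
    B.equiv (hrestB A B s) (hrestB A B t) ∧
    s.map (htag A B) = t.map (htag A B)

/- ### Copy-cat strategies -/

/-- The copy-cat play set on `A ⊸ B`, along a renaming `f` of the moves of `B`
as moves of `A` (use `f = id` when `B` has the same moves as `A`):
even-length positions whose two restrictions are `≈_A`-equivalent. -/
def copycat (A B : LGame L) (f : B.M → A.M) : Set (List (hM A B)) :=
  {s | s ∈ hpos A B ∧ Even s.length ∧ A.equiv (hrestA A B s) ((hrestB A B s).map f)}

/-- Copy-cat plays that are only required to be legal in the *unlevelled* sense
(conditions (p1)–(p5) plus membership of the restrictions), i.e. without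
imposing the Level condition (p6). -/
def copycatRaw (A B : LGame L) (f : B.M → A.M) : Set (List (hM A B)) :=
  {s | ValidSeq (hlab A B) (hjust A B) s ∧ hrestA A B s ∈ A.pos ∧ hrestB A B s ∈ B.pos ∧
       Even s.length ∧ A.equiv (hrestA A B s) ((hrestB A B s).map f)}

/- ### Composition -/

/-- Moves of the interaction arena `(A ⊸ B) ⊸ C`. -/
abbrev cM (A B C : LGame L) : Type := (C.Init × hM A B) ⊕ C.M

def crestAB (A B C : LGame L) (s : List (cM A B C)) : List (hM A B) :=
  s.filterMap fun m => match m with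
    | .inl (_, x) => some x
    | .inr _ => none

def crestBC (A B C : LGame L) (s : List (cM A B C)) : List (hM B C) :=
  s.filterMap fun m => match m with
    | .inl (c, .inr b) => some (.inl (c, b))
    | .inl (_, .inl _) => none
    | .inr m' => some (.inr m')

def crestAC (A B C : LGame L) (s : List (cM A B C)) : List (hM A C) :=
  s.filterMap fun m => match m with
    | .inl (c, .inl (_, a)) => some (.inl (c, a))
    | .inl (_, .inr _) => none
    | .inr m' => some (.inr m')

/-- Composition of strategies `σ : A → B` and `τ : B → C`: parallel
composition plus hiding. -/
def comp (A B C : LGame L) (σ : Set (List (hM A B))) (τ : Set (List (hM B C))) :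
    Set (List (hM A C)) :=
  {u | ∃ s : List (cM A B C), u = crestAC A B C s ∧
        crestAB A B C s ∈ σ ∧ crestBC A B C s ∈ τ}

/- ### Promotion apparatus -/

/-- The comultiplication `δ_A : !A → !!A`: copy-cat along the pairing bijection. -/
def delta (A : LGame L) : Set (List (hM (bang A) (bang (bang A)))) :=
  copycat (bang A) (bang (bang A)) (fun p => (Nat.pair p.1 p.2.1, p.2.2))

-- Restriction of a play of `!A ⊸ !B` to the `i`-th index, as a play of `A ⊸ B`.
open Classical in
noncomputable def bhres (A B : LGame L) (i : ℕ) (s : List (hM (bang A) (bang B))) :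
    List (hM A B) :=
  s.filterMap fun m => match m with
    | .inl (b, (k, a)) =>
        if h : b.1.1 = i ∧ k = i ∧ B.just b.1.2 = none
        then some (.inl (⟨b.1.2, h.2.2⟩, a)) else none
    | .inr (j, b) => if j = i then some (.inr b) else none

/-- The functorial action `!σ : !A → !B`: play `σ` componentwise in each index. -/
noncomputable def bangStrat (A B : LGame L) (σ : Set (List (hM A B))) :
    Set (List (hM (bang A) (bang B))) :=
  {s | s ∈ hpos (bang A) (bang B) ∧
       (∀ p ∈ s, ∀ b i a, p = Sum.inl (b, (i, a)) → b.1.1 = i) ∧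
       ∀ i : ℕ, bhres A B i s ∈ σ}

/- ### No-flow -/

/-- A strategy on `(A ⊗ C) ⊸ B` plays a move in `A`. -/
def PlaysInA (A C B : LGame L) (σ : Set (List (hM (tensor A C) B))) : Prop :=
  ∃ s ∈ σ, ∃ (b : B.Init) (a : A.M), (Sum.inl (b, Sum.inl a) : hM (tensor A C) B) ∈ s

/-- `A ↛ B`: every strategy `A ⊗ C → B` factors through the projection to `C`
(the composite of `⊤_A ⊗ id_C` with the canonical iso `I ⊗ C ≅ C`, which is the
copy-cat between the `C`-component of `A ⊗ C` and `C`). -/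
def NotFlow (A B : LGame L) : Prop :=
  ∀ C : LGame L, C.Valid → ∀ f, IsStrategy (lhom (tensor A C) B) f →
    ∃ g, IsStrategy (lhom C B) g ∧
      f = comp (tensor A C) C B (copycat (tensor A C) C Sum.inr) g

end LGame

end AJM

open AJM LGame

namespace NoNatAux

/-- `ValidSeq` is closed under prefixes. -/
lemma validSeq_prefix {M : Type} (lab : M → Pol × QA) (just : M → Option M)
    {s t : List M} (hpre : s <+: t) (hv : ValidSeq lab just t) :
    ValidSeq lab just s := by
  obtain ⟨r, rfl⟩ := hpre
  obtain ⟨h1, h2, h3, ⟨w, hw1, hw2⟩, h5⟩ := hv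
  refine ⟨?_, (List.isChain_append.mp h2).1, h3.sublist (List.sublist_append_left s r),
    ⟨w, (List.prefix_append s r).trans hw1, hw2⟩, ?_⟩
  · intro m hm
    apply h1
    cases s with
    | nil => simp at hm
    | cons a s => simpa using hm
  · intro s₁ m s₂ he m' hm'
    exact h5 s₁ m (s₂ ++ r) (by rw [he]; simp) m' hm'

/-- A question followed by its answer is a valid sequence. -/
lemma validSeq_pair {M : Type} (lab : M → Pol × QA) (just : M → Option M) (q a : M)
    (h1 : (lab q).1 = Pol.O) (h2 : (lab q).1 ≠ (lab a).1) (h3 : q ≠ a)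
    (h4 : (lab a).2 = QA.Ans) (h5 : just a = some q) (h6 : just q = none) :
    ValidSeq lab just [q, a] := by
  refine ⟨fun m hm => by simp at hm; exact hm ▸ h1, by simp [List.Chain', h2], by simp [h3],
    ⟨[q, a], List.prefix_rfl, by simpa using WB.wrap a q [] h4 h5 WB.nil⟩, ?_⟩
  rintro (_ | ⟨x, _ | ⟨y, l⟩⟩) m s₂ he m' hm'
  · simp at he
    rw [← he.1, h6] at hm'; cases hm'
  · simp at he
    obtain ⟨rfl, rfl, rfl⟩ := he
    rw [h5] at hm'
    simp_all
  · exfalso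
    have := congrArg List.length he
    simp at this


variable {L : Type} [SemilatticeSup L] [OrderBot L]

/-- Positions of the counterexample game: one opponent question `none`
answered by one of two player answers `some b`. -/
def Bpos : Set (List (Option Bool)) :=
  {s | s <+: [none, some false] ∨ s <+: [none, some true]}

/-- The counterexample game. -/
def Bgame (L : Type) [SemilatticeSup L] [OrderBot L] : LGame L where
  M := Option Bool
  lab := fun m => match m with | none => (Pol.O, QA.Q) | some _ => (Pol.P, QA.Ans)
  just := fun m => match m with | none => none | some _ => some none
  lev := fun _ => ⊥
  pos := Bpos
  equiv := fun s t => s = t ∧ s ∈ Bpos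

lemma Bpos_prefix {s t : List (Option Bool)} (h : s <+: t) (ht : t ∈ Bpos) : s ∈ Bpos := by
  rcases ht with ht | ht
  · exact Or.inl (h.trans ht)
  · exact Or.inr (h.trans ht)

lemma Bgame_validSeq (b : Bool) :
    ValidSeq (Bgame L).lab (Bgame L).just [none, some b] :=
  validSeq_pair _ _ _ _ rfl (by simp [Bgame]) (by intro hh; cases hh) rfl rfl rfl

lemma Bgame_valid : (Bgame L).Valid := by
  constructor
  · -- just_wf
    have hnone : Acc (fun m m' : Option Bool => (Bgame L).just m' = some m) none := by
      constructor
      rintro y hy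
      simp [Bgame] at hy
    constructor
    rintro (_ | b)
    · exact hnone
    · constructor
      rintro y hy
      simp [Bgame] at hy
      cases hy; exact hnone
  · rintro (_ | b) m' hm' <;> simp_all [Bgame] <;> cases hm' <;> simp
  · rintro (_ | b) m' hm' _ <;> simp_all [Bgame] <;> cases hm' <;> simp
  · rintro (_ | b) hb <;> simp_all [Bgame]
  · exact ⟨[], Or.inl ⟨[none, some false], rfl⟩⟩
  · exact fun s t hst ht => Bpos_prefix hst ht
  · rintro s (hs | hs) <;> exact validSeq_prefix _ _ hs (Bgame_validSeq _)
  · rintro s hs m hm m' hm'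
    exact le_refl _
  · rintro s t ⟨rfl, hs⟩
    exact ⟨hs, hs⟩
  · exact fun s hs => ⟨rfl, hs⟩
  · rintro s t ⟨rfl, hs⟩
    exact ⟨rfl, hs⟩
  · rintro s t u ⟨rfl, hs⟩ ⟨rfl, _⟩
    exact ⟨rfl, hs⟩
  · rintro s t ⟨rfl, hs⟩
    rfl
  · rintro s t s' t' ⟨rfl, hs⟩ hs' ht' hlen
    have : s' = t' := by
      rcases le_total s'.length t'.length with hle | hle
      · exact ((List.prefix_of_prefix_length_le hs' ht' hle).eq_of_length hlen)
      · exact ((List.prefix_of_prefix_length_le ht' hs' hle).eq_of_length hlen.symm).symm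
    exact ⟨this, Bpos_prefix hs' hs⟩
  · rintro s t a ⟨rfl, hs⟩ hsa
    exact ⟨a, rfl, hsa⟩

lemma iGame_valid : (iGame (L := L)).Valid := by
  constructor
  · exact ⟨fun m => m.elim⟩
  · exact fun m => m.elim
  · exact fun m => m.elim
  · exact fun m => m.elim
  · exact ⟨[], rfl⟩
  · intro s t hst ht
    have : t = [] := ht
    subst this
    exact List.prefix_nil.mp hst
  · intro s hs
    have : s = [] := hs
    subst this
    exact ⟨fun m hm => by simp at hm, by simp [List.Chain'], by simp, ⟨[], List.prefix_rfl, WB.nil⟩,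
      by rintro s₁ m s₂ he; exact absurd he (by simp)⟩
  · intro s hs m hm
    exact m.elim
  · rintro s t ⟨rfl, rfl⟩
    exact ⟨rfl, rfl⟩
  · intro s hs
    exact ⟨hs, hs⟩
  · rintro s t ⟨rfl, rfl⟩
    exact ⟨rfl, rfl⟩
  · rintro s t u ⟨rfl, rfl⟩ ⟨_, rfl⟩
    exact ⟨rfl, rfl⟩
  · rintro s t ⟨rfl, rfl⟩
    rfl
  · rintro s t s' t' ⟨rfl, rfl⟩ hs' ht' _
    exact ⟨List.prefix_nil.mp hs', List.prefix_nil.mp ht'⟩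
  · rintro s t a _ _
    exact a.elim

/-- The strategy answering the opening question with `some b`. -/
def sigma (L : Type) [SemilatticeSup L] [OrderBot L] (b : Bool) :
    Set (List (hM (iGame (L := L)) (Bgame L))) :=
  {[], [Sum.inr none, Sum.inr (some b)]}

lemma eq_map_inr {α β : Type} :
    ∀ (s : List (α ⊕ β)), (∀ x ∈ s, ∃ m, x = Sum.inr m) → ∃ l : List β, s = l.map Sum.inr := by
  intro s
  induction s with
  | nil => exact fun _ => ⟨[], rfl⟩
  | cons x t ih =>
    intro hx
    obtain ⟨m, rfl⟩ := hx x (by simp)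
    obtain ⟨l, hl⟩ := ih (fun y hy => hx y (by simp [hy]))
    exact ⟨m :: l, by simp [hl]⟩

lemma hrestA_map_inr (A B : LGame L) (l : List B.M) :
    hrestA A B (l.map Sum.inr) = [] := by
  induction l <;> simp_all [hrestA]

lemma hrestB_map_inr (A B : LGame L) (l : List B.M) :
    hrestB A B (l.map Sum.inr) = l := by
  induction l <;> simp_all [hrestB]

lemma hrestAb_map_inr (A B : LGame L) (b : B.Init) (l : List B.M) :
    hrestAb A B b (l.map Sum.inr) = [] := by
  induction l <;> simp_all [hrestAb]

lemma all_inr_ext (A B : LGame L) :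
    ∀ (l : List B.M) (t : List (hM A B)),
      (l.map Sum.inr).map (htag A B) = t.map (htag A B) →
      hrestB A B t = l → t = l.map Sum.inr := by
  intro l
  induction l with
  | nil =>
    intro t h1 _
    have := (List.map_eq_nil_iff.mp h1.symm)
    simp [this]
  | cons a l ih =>
    intro t h1 h2
    cases t with
    | nil => simp at h1
    | cons x t =>
      rcases x with ⟨c, m⟩ | m
      · simp [htag] at h1
      · simp only [List.map_cons, List.map_map] at h1
        have hm : m = a := by
          simp [hrestB] at h2
          exact h2.1
        subst hm
        simp [hrestB] at h2
        have := ih t (by simpa [htag] using h1) h2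
        simp [this]

lemma crestAC_map_inr (A B C : LGame L) (l : List C.M) :
    crestAC A B C (l.map Sum.inr) = l.map Sum.inr := by
  induction l <;> simp_all [crestAC]

lemma crestBC_map_inr (A B C : LGame L) (l : List C.M) :
    crestBC A B C (l.map Sum.inr) = l.map Sum.inr := by
  induction l <;> simp_all [crestBC]

lemma crestAB_map_inr (A B C : LGame L) (l : List C.M) :
    crestAB A B C (l.map Sum.inr) = [] := by
  induction l <;> simp_all [crestAB]

lemma pairBpos (b : Bool) : [none, some b] ∈ Bpos := by
  cases b
  · exact Or.inl List.prefix_rfl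
  · exact Or.inr List.prefix_rfl

lemma nil_mem_hpos : ([] : List (hM (iGame (L := L)) (Bgame L))) ∈ hpos iGame (Bgame L) :=
  ⟨⟨fun m hm => by simp at hm, by simp [List.Chain'], by simp, ⟨[], List.prefix_rfl, WB.nil⟩,
      by rintro s₁ m s₂ he _ _; exact absurd he (by simp)⟩,
    fun m hm => by simp at hm, rfl, Or.inl List.nil_prefix⟩

lemma pair_mem_hpos (b : Bool) :
    [Sum.inr none, Sum.inr (some b)] ∈ hpos (iGame (L := L)) (Bgame L) := by
  refine ⟨validSeq_pair _ _ _ _ rfl (fun hh => Pol.noConfusion hh) (by intro hh; cases hh) rfl rfl rfl,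
    ?_, rfl, ?_⟩
  · intro m hm m' hm'
    rcases hm with _ | ⟨_, _ | ⟨_, ⟨⟩⟩⟩
    · cases hm'
    · cases hm'
      exact le_refl (⊥ : L)
  · exact pairBpos b

lemma sigma_pair_split (b : Bool) (s : List (hM (iGame (L := L)) (Bgame L))) (a c) :
    s ++ [a, c] = [Sum.inr none, Sum.inr (some b)] →
    s = [] ∧ a = Sum.inr none ∧ c = Sum.inr (some b) := by
  rcases s with _ | ⟨x, _ | ⟨y, l⟩⟩ <;> intro he
  · cases he; exact ⟨rfl, rfl, rfl⟩
  · cases he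
  · injection he with _ he; injection he with _ he
    rcases l with _ | ⟨_, _⟩ <;> cases he

lemma sigma_strategy (b : Bool) :
    IsStrategy (lhom (iGame (L := L)) (Bgame L)) (sigma L b) := by
  have hmem : ∀ x, x ∈ sigma L b → x = [] ∨ x = [Sum.inr none, Sum.inr (some b)] := by
    intro x hx
    exact hx
  constructor
  · intro x hx
    rcases hmem x hx with rfl | rfl
    · exact nil_mem_hpos
    · exact pair_mem_hpos b
  · intro x hx
    rcases hmem x hx with rfl | rfl
    · exact ⟨0, rfl⟩
    · exact ⟨1, rfl⟩
  · exact ⟨[], Set.mem_insert _ _⟩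
  · intro s a c hs
    rcases hmem _ hs with he | he
    · rcases s with _ | _ <;> cases he
    · obtain ⟨rfl, -, -⟩ := sigma_pair_split b s a c he
      exact Set.mem_insert _ _
  · intro s t hs ⟨hsp, htp, hab, hbb, htags⟩
    rcases hmem _ hs with rfl | rfl
    · have : t = [] := List.map_eq_nil_iff.mp htags.symm
      subst this; exact Set.mem_insert _ _
    · have h2 : hrestB iGame (Bgame L) t = [none, some b] := hbb.1.symm
      have := all_inr_ext iGame (Bgame L) [none, some b] t htags h2
      subst this; exact Set.mem_insert_of_mem _ rfl
  · intro s t a c a' c' hs ht heqv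
    obtain ⟨rfl, rfl, rfl⟩ := sigma_pair_split b s a c ((hmem _ hs).resolve_left (by intro he; rcases s with _ | _ <;> cases he))
    obtain ⟨rfl, rfl, rfl⟩ := sigma_pair_split b t a' c' ((hmem _ ht).resolve_left (by intro he; rcases t with _ | _ <;> cases he))
    exact ⟨pair_mem_hpos b, pair_mem_hpos b,
      fun bi => ⟨rfl, rfl⟩, ⟨rfl, pairBpos b⟩, rfl⟩

lemma no_inl {ℓ ℓ' : L} (h : ¬ ℓ ≤ ℓ')
    {u : List (hM (T ℓ (Bgame L)) (T ℓ' (Bgame L)))}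
    (hu : u ∈ hpos (T ℓ (Bgame L)) (T ℓ' (Bgame L))) :
    ∀ x ∈ u, ∃ m, x = Sum.inr m := by
  obtain ⟨hv, hlev, -, -⟩ := hu
  have hnone : ∀ c : (T ℓ' (Bgame L)).Init, Sum.inl (c, (none : Option Bool)) ∉ u := by
    intro c hc
    have := hlev _ hc (Sum.inr c.1) rfl
    simp only [hlev, T, Bgame] at this
    rw [bot_sup_eq, bot_sup_eq] at this
    exact h this
  rintro (⟨c, m⟩ | m) hx
  · exfalso
    rcases m with _ | b'
    · exact hnone c hx
    · obtain ⟨s₁, s₂, hdec⟩ := List.append_of_mem hx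
      have hj := hv.2.2.2.2 s₁ _ s₂ hdec (Sum.inl (c, none)) rfl
      exact hnone c (by rw [hdec]; exact List.mem_append_left _ hj)
  · exact ⟨m, rfl⟩

lemma single_mem_hposT (ℓ ℓ' : L) :
    [Sum.inr none] ∈ hpos (T ℓ (Bgame L)) (T ℓ' (Bgame L)) := by
  refine ⟨validSeq_prefix _ _ ⟨[Sum.inr (some false)], rfl⟩
      (validSeq_pair _ _ (Sum.inr none) (Sum.inr (some false)) rfl
        (fun hh => Pol.noConfusion hh) (by simp) rfl rfl rfl), ?_, ?_, ?_⟩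
  · intro m hm m' hm'
    rcases hm with _ | ⟨_, ⟨⟩⟩
    cases hm'
  · exact Or.inl List.nil_prefix
  · exact Or.inl ⟨[some false], rfl⟩

end NoNatAux
open AJM LGame in
/-- If `¬(ℓ ≤ ℓ')`, there is no natural transformation `T_ℓ → T_ℓ'` on the
category of `L`-levelled games and strategies: no family of strategies
`τ A : T_ℓ A → T_ℓ' A` such that `(T_ℓ σ) ; τ_B = τ_A ; (T_ℓ' σ)` for every
strategy `σ : A → B` (recall `T_ℓ σ = σ` as a set of plays). -/
theorem no_natural_transformation {L : Type} [SemilatticeSup L] [OrderBot L]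
    (ℓ ℓ' : L) (h : ¬ ℓ ≤ ℓ') :
    ¬ ∃ τ : (A : LGame L) → Set (List (hM (T ℓ A) (T ℓ' A))),
        (∀ A : LGame L, A.Valid → IsStrategy (lhom (T ℓ A) (T ℓ' A)) (τ A)) ∧
        (∀ A B : LGame L, A.Valid → B.Valid →
          ∀ σ : Set (List (hM A B)), IsStrategy (lhom A B) σ →
            comp (T ℓ A) (T ℓ B) (T ℓ' B) σ (τ B) =
            comp (T ℓ A) (T ℓ' A) (T ℓ' B) (τ A) σ) := by
  rintro ⟨τ, hstrat, hnat⟩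
  classical
  -- the only play of `τ I` is the empty one
  have hτI : ([] : List (hM (T ℓ (iGame (L := L))) (T ℓ' iGame))) ∈ τ iGame := by
    obtain ⟨s, hs⟩ := (hstrat iGame NoNatAux.iGame_valid).nonempty
    cases s with
    | nil => exact hs
    | cons x l =>
      rcases x with ⟨c, e⟩ | e
      · exact e.elim
      · exact e.elim
  -- naturality forces `τ B` to answer the opening question with `some b`, for each `b`
  have key : ∀ b : Bool,
      ([Sum.inr none, Sum.inr (some b)] :
        List (hM (T ℓ (NoNatAux.Bgame L)) (T ℓ' (NoNatAux.Bgame L)))) ∈ τ (NoNatAux.Bgame L) := by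
    intro b
    have hR : ([Sum.inr none, Sum.inr (some b)] :
        List (hM (T ℓ (iGame (L := L))) (T ℓ' (NoNatAux.Bgame L)))) ∈
        comp (T ℓ iGame) (T ℓ' iGame) (T ℓ' (NoNatAux.Bgame L)) (τ iGame)
          (NoNatAux.sigma L b) := by
      refine ⟨List.map Sum.inr [none, some b], ?_, ?_, ?_⟩
      · rw [NoNatAux.crestAC_map_inr]
        rfl
      · rw [NoNatAux.crestAB_map_inr]
        exact hτI
      · rw [NoNatAux.crestBC_map_inr]
        exact Set.mem_insert_of_mem _ rfl
    rw [← hnat iGame (NoNatAux.Bgame L) NoNatAux.iGame_valid NoNatAux.Bgame_valid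
      (NoNatAux.sigma L b) (NoNatAux.sigma_strategy b)] at hR
    obtain ⟨s, hAC, hAB, hBC⟩ := hR
    have hnoinl := NoNatAux.no_inl h
      ((hstrat (NoNatAux.Bgame L) NoNatAux.Bgame_valid).subset_pos hBC)
    have hs_inr : ∀ x ∈ s, ∃ m, x = Sum.inr m := by
      rintro (⟨c, (⟨bi, e⟩ | b')⟩ | m) hx
      · exact e.elim
      · exfalso
        have hmem : (Sum.inl (c, b') : hM (T ℓ (NoNatAux.Bgame L)) (T ℓ' (NoNatAux.Bgame L))) ∈
            crestBC (T ℓ iGame) (T ℓ (NoNatAux.Bgame L)) (T ℓ' (NoNatAux.Bgame L)) s :=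
          List.mem_filterMap.mpr ⟨_, hx, rfl⟩
        obtain ⟨m, hm⟩ := hnoinl _ hmem
        cases hm
      · exact ⟨m, rfl⟩
    obtain ⟨l, rfl⟩ := NoNatAux.eq_map_inr s hs_inr
    rw [NoNatAux.crestAC_map_inr] at hAC
    have hl : l = [none, some b] := by
      rcases l with _ | ⟨x, _ | ⟨y, _ | ⟨z, r⟩⟩⟩ <;> simp_all
      obtain ⟨h1, h2⟩ := hAC
      cases h1; cases h2; rfl
    subst hl
    exact hBC
  -- but `τ B` is deterministic, so the two answers must coincide: contradiction
  have hdet := (hstrat (NoNatAux.Bgame L) NoNatAux.Bgame_valid).det [] []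
    (Sum.inr none) (Sum.inr (some false)) (Sum.inr none) (Sum.inr (some true))
    (key false) (key true)
    ⟨NoNatAux.single_mem_hposT ℓ ℓ',
      NoNatAux.single_mem_hposT ℓ ℓ',
      fun c => ⟨rfl, Or.inl List.nil_prefix⟩,
      ⟨rfl, Or.inl ⟨[some false], rfl⟩⟩, rfl⟩
  have hcontra : ([none, some false] : List (Option Bool)) = [none, some true] :=
    hdet.2.2.2.1.1
  simp at hcontra
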